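/- Let G be a finite connected locally connected graph, let z be a vertex, and let a ≠ z be a vertex such that the class [a]_z = {w ≠ z : line(z,w) = line(z,a)} has at least two elements and is not contained in the neighborhood N(z). Then for all distinct u, v ∈ [a]_z: (i) line(u,v) = {w : d(u,w) + d(w,v) = d(u,v)}; (ii) z ∈ line(u,v); and (iii) line(u,v) ≠ line(z,w) for every vertex w ≠ z. -/

import Mathlib

open SimpleGraph

/-- The line defined by two vertices `a` and `b` of a graph: `{a, b}` together with all
vertices `c` lying on a shortest path through `a`, `b` and `c` (in some order). -/
def SimpleGraph.line {V : Type*} (G : SimpleGraph V) (a b : V) : Set V :=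
  {a, b} ∪ {c | G.dist a b = G.dist a c + G.dist c b ∨
                G.dist a c = G.dist a b + G.dist b c ∨
                G.dist b c = G.dist b a + G.dist a c}

/-- The set of all lines of a graph. -/
def SimpleGraph.lineSet {V : Type*} (G : SimpleGraph V) : Set (Set V) :=
  {s | ∃ a b : V, a ≠ b ∧ s = G.line a b}

/-- A graph is locally connected if the subgraph induced on each neighborhood is connected. -/
def SimpleGraph.LocallyConnected {V : Type*} (G : SimpleGraph V) : Prop :=
  ∀ v : V, (G.induce (G.neighborSet v)).Connected

/-- The class `[u]_z`: all vertices `w ≠ z` defining the same line with `z` as `u` does. -/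
def SimpleGraph.lineClass {V : Type*} (G : SimpleGraph V) (z u : V) : Set V :=
  {w | w ≠ z ∧ G.line z w = G.line z u}

section Helpers

variable {V : Type*} {G : SimpleGraph V}

lemma mem_line_iff {a b c : V} :
    c ∈ G.line a b ↔ c = a ∨ c = b ∨ (G.dist a b = G.dist a c + G.dist c b ∨
      G.dist a c = G.dist a b + G.dist b c ∨ G.dist b c = G.dist b a + G.dist a c) := by
  simp only [SimpleGraph.line, Set.mem_union, Set.mem_insert_iff, Set.mem_singleton_iff,
    Set.mem_setOf_eq, or_assoc]

lemma right_mem_line {a b : V} : b ∈ G.line a b := by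
  rw [mem_line_iff]; exact Or.inr (Or.inl rfl)

/-- Discrete intermediate value theorem along a walk. -/
lemma walk_ivt {W : Type*} {H : SimpleGraph W} (f : W → ℕ)
    (hf : ∀ ⦃a b⦄, H.Adj a b → f b ≤ f a + 1)
    {x y : W} (p : H.Walk x y) :
    ∀ m : ℕ, f x ≤ m → m ≤ f y → ∃ z ∈ p.support, f z = m := by
  induction p with
  | nil => exact fun m hx hy => ⟨_, by simp, le_antisymm hx hy⟩
  | @cons a b c h q ih =>
    intro m hx hy
    by_cases hm : f a = m
    · exact ⟨a, by simp, hm⟩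
    · have hb : f b ≤ m := le_trans (hf h) (by omega)
      obtain ⟨z, hz, hfz⟩ := ih m hb hy
      exact ⟨z, by simp [hz], hfz⟩

/-- IVT in a neighborhood of a locally connected graph. -/
lemma nbhd_ivt (hG : G.Connected) (hlc : G.LocallyConnected)
    (x c : V) {y0 y1 : V} (h0 : G.Adj x y0) (h1 : G.Adj x y1) (m : ℕ)
    (ha : G.dist c y0 ≤ m) (hb : m ≤ G.dist c y1) :
    ∃ y, G.Adj x y ∧ G.dist c y = m := by
  obtain ⟨p⟩ := (hlc x).preconnected ⟨y0, h0⟩ ⟨y1, h1⟩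
  have hf : ∀ ⦃a b : G.neighborSet x⦄, (G.induce (G.neighborSet x)).Adj a b →
      G.dist c b.1 ≤ G.dist c a.1 + 1 := by
    intro a b hab
    have hadj : G.Adj a.1 b.1 := by simpa using hab
    have h2 : G.dist a.1 b.1 = 1 := SimpleGraph.dist_eq_one_iff_adj.mpr hadj
    have h3 := hG.dist_triangle (u := c) (v := a.1) (w := b.1)
    omega
  obtain ⟨y, _, hfy⟩ := walk_ivt (fun a => G.dist c a.1) hf p m ha hb
  exact ⟨y.1, y.2, hfy⟩

/-- A vertex at positive distance has a neighbor one step closer. -/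
lemma exists_nbr_dist (hG : G.Connected) (z w : V) {n : ℕ}
    (h : G.dist z w = n + 1) : ∃ y, G.Adj w y ∧ G.dist z y = n := by
  obtain ⟨p, hp⟩ := hG.exists_walk_length_eq_dist w z
  cases p with
  | nil =>
    exfalso
    rw [SimpleGraph.dist_comm] at h
    simp at h
  | @cons _ b _ hadj q =>
    refine ⟨b, hadj, ?_⟩
    have h1 : G.dist b z ≤ q.length := SimpleGraph.dist_le q
    have h2 : G.dist z b = G.dist b z := SimpleGraph.dist_comm
    have h3 : G.dist w z = G.dist z w := SimpleGraph.dist_comm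
    have h4 : G.dist z w ≤ G.dist z b + G.dist b w := hG.dist_triangle
    have h5 : G.dist b w = 1 := SimpleGraph.dist_eq_one_iff_adj.mpr hadj.symm
    simp only [SimpleGraph.Walk.length_cons] at hp
    omega

end Helpers

section Main

variable {V : Type*} {G : SimpleGraph V}

/-- Core of Lemma M: it is impossible that `u` lies strictly between `z` and `w`
when `line z u = line z w`. -/
lemma no_strict_between (hG : G.Connected) (hlc : G.LocallyConnected)
    {z u w : V} (huz : u ≠ z) (hwz : w ≠ z) (huw : u ≠ w)
    (hline : G.line z u = G.line z w)
    (hbad : G.dist z w = G.dist z u + G.dist u w) : False := by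
  have hK : 1 ≤ G.dist z u := hG.pos_dist_of_ne (Ne.symm huz)
  have hM : 1 ≤ G.dist u w := hG.pos_dist_of_ne huw
  obtain ⟨y0, hy0a, hy0⟩ := exists_nbr_dist hG z u
    (show G.dist z u = (G.dist z u - 1) + 1 by omega)
  obtain ⟨y1, hy1a, hy1⟩ := exists_nbr_dist hG w u
    (show G.dist w u = (G.dist u w - 1) + 1 by rw [SimpleGraph.dist_comm]; omega)
  have c1 : G.dist w y0 = G.dist y0 w := SimpleGraph.dist_comm
  have c2 : G.dist z y0 = G.dist y0 z := SimpleGraph.dist_comm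
  have t1 : G.dist z w ≤ G.dist z y0 + G.dist y0 w := hG.dist_triangle
  have e1 : G.dist u y0 = 1 := SimpleGraph.dist_eq_one_iff_adj.mpr hy0a
  have t2 : G.dist w y0 ≤ G.dist w u + G.dist u y0 := hG.dist_triangle
  have c3 : G.dist w u = G.dist u w := SimpleGraph.dist_comm
  obtain ⟨p, hpa, hp⟩ := nbhd_ivt hG hlc u w hy1a hy0a (G.dist u w)
    (by omega) (by omega)
  have e2 : G.dist u p = 1 := SimpleGraph.dist_eq_one_iff_adj.mpr hpa
  have c4 : G.dist p u = G.dist u p := SimpleGraph.dist_comm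
  have c5 : G.dist w p = G.dist p w := SimpleGraph.dist_comm
  have c6 : G.dist u z = G.dist z u := SimpleGraph.dist_comm
  have c7 : G.dist w z = G.dist z w := SimpleGraph.dist_comm
  have t3 : G.dist z p ≤ G.dist z u + G.dist u p := hG.dist_triangle
  have t4 : G.dist z u ≤ G.dist z p + G.dist p u := hG.dist_triangle
  have hpz : p ≠ z := by rintro rfl; omega
  have hpw : p ≠ w := by
    intro h
    rw [h, SimpleGraph.dist_self] at hp
    omega
  have hpu : p ≠ u := by rintro rfl; exact G.irrefl hpa
  have hXpos : 1 ≤ G.dist z p := hG.pos_dist_of_ne (Ne.symm hpz)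
  have hiff : p ∈ G.line z u ↔ p ∈ G.line z w := by rw [hline]
  rw [mem_line_iff, mem_line_iff] at hiff
  simp only [hpz, hpu, hpw, false_or] at hiff
  have c8 : G.dist p z = G.dist z p := SimpleGraph.dist_comm
  omega

/-- Lemma M: if two vertices define the same line with `z`, then `z` lies between them. -/
lemma between_of_line_eq (hG : G.Connected) (hlc : G.LocallyConnected)
    {z u w : V} (huz : u ≠ z) (hwz : w ≠ z) (huw : u ≠ w)
    (hline : G.line z u = G.line z w) :
    G.dist u w = G.dist u z + G.dist z w := by
  have hu : u ∈ G.line z w := hline ▸ right_mem_line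
  rw [mem_line_iff] at hu
  have c1 : G.dist u z = G.dist z u := SimpleGraph.dist_comm
  have c2 : G.dist w u = G.dist u w := SimpleGraph.dist_comm
  have c3 : G.dist w z = G.dist z w := SimpleGraph.dist_comm
  rcases hu with h | h | h | h | h
  · exact absurd h huz
  · exact absurd h huw
  · exact absurd h (fun hb => no_strict_between hG hlc huz hwz huw hline hb)
  · exact absurd h (fun hb => no_strict_between hG hlc hwz huz huw.symm hline.symm (by omega))
  · omega

/-- Nothing lies strictly beyond `v` (seen from `u`) when `line z u = line z v`. -/
lemma eq_of_beyond (hG : G.Connected) (hlc : G.LocallyConnected)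
    {z u v c : V} (huz : u ≠ z) (hvz : v ≠ z) (huv : u ≠ v)
    (hline : G.line z u = G.line z v)
    (hc : G.dist u c = G.dist u v + G.dist v c) : c = v := by
  by_cases hcv : c = v
  · exact hcv
  exfalso
  have huvd : G.dist u v = G.dist u z + G.dist z v :=
    between_of_line_eq hG hlc huz hvz huv hline
  have hK : 1 ≤ G.dist z u := hG.pos_dist_of_ne (Ne.symm huz)
  have hL : 1 ≤ G.dist z v := hG.pos_dist_of_ne (Ne.symm hvz)
  have hr : 1 ≤ G.dist v c := hG.pos_dist_of_ne (fun h => hcv h.symm)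
  obtain ⟨c', hc'a, hc'⟩ := exists_nbr_dist hG c v
    (show G.dist c v = (G.dist v c - 1) + 1 by rw [SimpleGraph.dist_comm]; omega)
  have e1 : G.dist v c' = 1 := SimpleGraph.dist_eq_one_iff_adj.mpr hc'a
  have t1 : G.dist u c' ≤ G.dist u v + G.dist v c' := hG.dist_triangle
  have t2 : G.dist u c ≤ G.dist u c' + G.dist c' c := hG.dist_triangle
  have cc1 : G.dist c c' = G.dist c' c := SimpleGraph.dist_comm
  obtain ⟨y0, hy0a, hy0⟩ := exists_nbr_dist hG z v
    (show G.dist z v = (G.dist z v - 1) + 1 by omega)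
  have t3 : G.dist u y0 ≤ G.dist u z + G.dist z y0 := hG.dist_triangle
  have cc2 : G.dist u z = G.dist z u := SimpleGraph.dist_comm
  obtain ⟨x, hxa, hx⟩ := nbhd_ivt hG hlc v u hy0a hc'a (G.dist u v)
    (by omega) (by omega)
  have e2 : G.dist v x = 1 := SimpleGraph.dist_eq_one_iff_adj.mpr hxa
  have cc3 : G.dist x v = G.dist v x := SimpleGraph.dist_comm
  have cc4 : G.dist x u = G.dist u x := SimpleGraph.dist_comm
  have cc5 : G.dist v z = G.dist z v := SimpleGraph.dist_comm
  have t4 : G.dist z x ≤ G.dist z v + G.dist v x := hG.dist_triangle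
  have t5 : G.dist z v ≤ G.dist z x + G.dist x v := hG.dist_triangle
  have hxz : x ≠ z := by rintro rfl; omega
  have hxu : x ≠ u := by
    intro h
    rw [h, SimpleGraph.dist_self] at hx
    omega
  have hxv : x ≠ v := fun h => G.irrefl (h ▸ hxa)
  have hiff : x ∈ G.line z u ↔ x ∈ G.line z v := by rw [hline]
  rw [mem_line_iff, mem_line_iff] at hiff
  simp only [hxz, hxu, hxv, false_or] at hiff
  have cc6 : G.dist x z = G.dist z x := SimpleGraph.dist_comm
  have hXpos : 1 ≤ G.dist z x := hG.pos_dist_of_ne (Ne.symm hxz)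
  omega

/-- Part (i): the line of two members of a class is the interval between them. -/
lemma line_eq_interval (hG : G.Connected) (hlc : G.LocallyConnected)
    {z u v : V} (huz : u ≠ z) (hvz : v ≠ z) (huv : u ≠ v)
    (hline : G.line z u = G.line z v) :
    G.line u v = {c | G.dist u c + G.dist c v = G.dist u v} := by
  ext c
  rw [mem_line_iff, Set.mem_setOf_eq]
  constructor
  · intro hmem
    have d1 : G.dist u u = 0 := SimpleGraph.dist_self
    have d2 : G.dist v v = 0 := SimpleGraph.dist_self
    rcases hmem with hc | hc | h | h | h
    · rw [hc]
      have d3 : G.dist u u = 0 := SimpleGraph.dist_self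
      omega
    · rw [hc]
      omega
    · omega
    · have hcv := eq_of_beyond hG hlc huz hvz huv hline h
      rw [hcv]
      omega
    · have hcu : c = u := eq_of_beyond hG hlc hvz huz huv.symm hline.symm h
      rw [hcu]
      have c1 : G.dist u v = G.dist v u := SimpleGraph.dist_comm
      omega
  · intro h
    exact Or.inr (Or.inr (Or.inl h.symm))

/-- Part (iii), case `w = u`: the line `line z u` cannot equal the interval. -/
lemma not_line_self_interval (hG : G.Connected) (hlc : G.LocallyConnected)
    {z u v : V} (huz : u ≠ z) (hvz : v ≠ z) (huv : u ≠ v)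
    (hline : G.line z u = G.line z v)
    (hI : G.line z u = {c | G.dist u c + G.dist c v = G.dist u v}) : False := by
  have huvd : G.dist u v = G.dist u z + G.dist z v :=
    between_of_line_eq hG hlc huz hvz huv hline
  have hK : 1 ≤ G.dist z u := hG.pos_dist_of_ne (Ne.symm huz)
  have hL : 1 ≤ G.dist z v := hG.pos_dist_of_ne (Ne.symm hvz)
  have cc1 : G.dist u z = G.dist z u := SimpleGraph.dist_comm
  have cc2 : G.dist v z = G.dist z v := SimpleGraph.dist_comm
  obtain ⟨y0, hy0a, hy0⟩ := exists_nbr_dist hG u z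
    (show G.dist u z = (G.dist u z - 1) + 1 by omega)
  obtain ⟨y1, hy1a, hy1⟩ := exists_nbr_dist hG v z
    (show G.dist v z = (G.dist v z - 1) + 1 by omega)
  have t1 : G.dist u v ≤ G.dist u y1 + G.dist y1 v := hG.dist_triangle
  have cc3 : G.dist y1 v = G.dist v y1 := SimpleGraph.dist_comm
  obtain ⟨y, hya, hy⟩ := nbhd_ivt hG hlc z u hy0a hy1a (G.dist u z)
    (by omega) (by omega)
  have e1 : G.dist z y = 1 := SimpleGraph.dist_eq_one_iff_adj.mpr hya
  have cc4 : G.dist y u = G.dist u y := SimpleGraph.dist_comm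
  have cc5 : G.dist y v = G.dist v y := SimpleGraph.dist_comm
  have cc6 : G.dist y z = G.dist z y := SimpleGraph.dist_comm
  have t2 : G.dist v y ≤ G.dist v z + G.dist z y := hG.dist_triangle
  have t3 : G.dist v z ≤ G.dist v y + G.dist y z := hG.dist_triangle
  have hyz : y ≠ z := fun h => G.irrefl (h ▸ hya)
  have hyu : y ≠ u := by
    intro h
    rw [h, SimpleGraph.dist_self] at hy
    omega
  have hyv : y ≠ v := by
    intro h
    rw [h] at hy
    omega
  have hiff1 : y ∈ G.line z u ↔ y ∈ G.line z v := by rw [hline]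
  have hiff2 : y ∈ G.line z u ↔ G.dist u y + G.dist y v = G.dist u v := by
    rw [hI, Set.mem_setOf_eq]
  rw [mem_line_iff, mem_line_iff] at hiff1
  rw [mem_line_iff] at hiff2
  simp only [hyz, hyu, hyv, false_or] at hiff1 hiff2
  omega

/-- Part (iii), case `w` strictly between `z` and `v`. -/
lemma not_between_v (hG : G.Connected) (hlc : G.LocallyConnected)
    {z u v w : V} (huz : u ≠ z) (hvz : v ≠ z) (huv : u ≠ v) (hwz : w ≠ z) (hwv : w ≠ v)
    (hline : G.line z u = G.line z v)
    (hI : G.line z w = {c | G.dist u c + G.dist c v = G.dist u v})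
    (hcase : G.dist z v = G.dist z w + G.dist w v) : False := by
  have huvd : G.dist u v = G.dist u z + G.dist z v :=
    between_of_line_eq hG hlc huz hvz huv hline
  have hK : 1 ≤ G.dist z u := hG.pos_dist_of_ne (Ne.symm huz)
  have hS : 1 ≤ G.dist z w := hG.pos_dist_of_ne (Ne.symm hwz)
  have hT : 1 ≤ G.dist w v := hG.pos_dist_of_ne hwv
  obtain ⟨y0, hy0a, hy0⟩ := exists_nbr_dist hG z w
    (show G.dist z w = (G.dist z w - 1) + 1 by omega)
  obtain ⟨y1, hy1a, hy1⟩ := exists_nbr_dist hG v w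
    (show G.dist v w = (G.dist w v - 1) + 1 by rw [SimpleGraph.dist_comm]; omega)
  have e1 : G.dist w y1 = 1 := SimpleGraph.dist_eq_one_iff_adj.mpr hy1a
  have t1 : G.dist z v ≤ G.dist z y1 + G.dist y1 v := hG.dist_triangle
  have t2 : G.dist z y1 ≤ G.dist z w + G.dist w y1 := hG.dist_triangle
  have cc1 : G.dist y1 v = G.dist v y1 := SimpleGraph.dist_comm
  obtain ⟨y, hya, hy⟩ := nbhd_ivt hG hlc w z hy0a hy1a (G.dist z w)
    (by omega) (by omega)
  have e2 : G.dist w y = 1 := SimpleGraph.dist_eq_one_iff_adj.mpr hya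
  have cc2 : G.dist y w = G.dist w y := SimpleGraph.dist_comm
  have cc3 : G.dist w z = G.dist z w := SimpleGraph.dist_comm
  have hyz : y ≠ z := by
    intro h
    rw [h, SimpleGraph.dist_self] at hy
    omega
  have hyw : y ≠ w := fun h => G.irrefl (h ▸ hya)
  have hnot : y ∉ G.line z w := by
    rw [mem_line_iff]
    simp only [hyz, hyw, false_or]
    push_neg
    refine ⟨by omega, by omega, by omega⟩
  have hsum : G.dist u y + G.dist y v ≠ G.dist u v := by
    intro h
    apply hnot
    rw [hI]
    exact h
  have t3 : G.dist u v ≤ G.dist u y + G.dist y v := hG.dist_triangle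
  have t4 : G.dist u y ≤ G.dist u z + G.dist z y := hG.dist_triangle
  have t5 : G.dist v y ≤ G.dist v w + G.dist w y := hG.dist_triangle
  have cc4 : G.dist u z = G.dist z u := SimpleGraph.dist_comm
  have cc5 : G.dist y v = G.dist v y := SimpleGraph.dist_comm
  have cc6 : G.dist v w = G.dist w v := SimpleGraph.dist_comm
  have e3 : G.dist u y = G.dist z u + G.dist z w := by omega
  have e4 : G.dist v y = G.dist w v + 1 := by omega
  have hyu : y ≠ u := by
    intro h
    rw [h, SimpleGraph.dist_self] at e3
    omega
  have hyv : y ≠ v := by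
    intro h
    rw [h, SimpleGraph.dist_self] at e4
    omega
  have hiff : y ∈ G.line z u ↔ y ∈ G.line z v := by rw [hline]
  rw [mem_line_iff, mem_line_iff] at hiff
  simp only [hyz, hyu, hyv, false_or] at hiff
  have cc7 : G.dist y u = G.dist u y := SimpleGraph.dist_comm
  have cc8 : G.dist y z = G.dist z y := SimpleGraph.dist_comm
  have cc9 : G.dist v z = G.dist z v := SimpleGraph.dist_comm
  omega

/-- Part (iii), antipodal case with `d(z,v) ≥ 2`: no walk needed. -/
lemma not_antipodal_far (hG : G.Connected)
    {z u v w : V}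
    (hline : G.line z u = G.line z v)
    (huvd : G.dist u v = G.dist u z + G.dist z v)
    (hSd : G.dist z w = G.dist z u + G.dist z v)
    (hTd : G.dist u w = G.dist z v)
    (hT'd : G.dist v w = G.dist z u)
    (hK : 1 ≤ G.dist z u)
    (hL2 : 2 ≤ G.dist z v) : False := by
  obtain ⟨y1, hy1a, hy1⟩ := exists_nbr_dist hG u w
    (show G.dist u w = (G.dist z v - 1) + 1 by omega)
  have e1 : G.dist w y1 = 1 := SimpleGraph.dist_eq_one_iff_adj.mpr hy1a
  have t1 : G.dist u v ≤ G.dist u y1 + G.dist y1 v := hG.dist_triangle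
  have t2 : G.dist v y1 ≤ G.dist v w + G.dist w y1 := hG.dist_triangle
  have t3 : G.dist z y1 ≤ G.dist z u + G.dist u y1 := hG.dist_triangle
  have t4 : G.dist z w ≤ G.dist z y1 + G.dist y1 w := hG.dist_triangle
  have cc1 : G.dist y1 v = G.dist v y1 := SimpleGraph.dist_comm
  have cc2 : G.dist y1 w = G.dist w y1 := SimpleGraph.dist_comm
  have cc3 : G.dist u z = G.dist z u := SimpleGraph.dist_comm
  have e2 : G.dist v y1 = G.dist z u + 1 := by omega
  have e3 : G.dist z y1 = G.dist z u + G.dist z v - 1 := by omega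
  have hy1z : y1 ≠ z := by
    intro h
    rw [h, SimpleGraph.dist_self] at e3
    omega
  have hy1v : y1 ≠ v := by
    intro h
    rw [h, SimpleGraph.dist_self] at e2
    omega
  have hmem : y1 ∈ G.line z u := by
    rw [mem_line_iff]
    right; right; right; left
    omega
  have hmem2 : y1 ∈ G.line z v := hline ▸ hmem
  rw [mem_line_iff] at hmem2
  simp only [hy1z, hy1v, false_or] at hmem2
  have cc5 : G.dist v z = G.dist z v := SimpleGraph.dist_comm
  have cc6 : G.dist y1 z = G.dist z y1 := SimpleGraph.dist_comm
  omega

/-- Part (iii), antipodal case with `k = l = 1`, using the far class member `b`. -/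
lemma not_antipodal_one (hG : G.Connected) (hlc : G.LocallyConnected)
    {z u w b : V}
    (hKe : G.dist z u = 1) (hzw : G.dist z w = 2) (hTe : G.dist u w = 1)
    (hlineb : G.line z u = G.line z b)
    (hP : 2 ≤ G.dist z b)
    (hub : G.dist u b = G.dist u z + G.dist z b) : False := by
  have cc1 : G.dist u z = G.dist z u := SimpleGraph.dist_comm
  have hwmem : w ∈ G.line z u := by
    rw [mem_line_iff]
    right; right; right; left
    omega
  have hwb : w ≠ b := by rintro rfl; omega
  have hwz : w ≠ z := by
    intro h
    rw [h, SimpleGraph.dist_self] at hzw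
    omega
  have hwmemb : w ∈ G.line z b := hlineb ▸ hwmem
  rw [mem_line_iff] at hwmemb
  simp only [hwz, hwb, false_or] at hwmemb
  have t1 : G.dist u b ≤ G.dist u w + G.dist w b := hG.dist_triangle
  have cc2 : G.dist w b = G.dist b w := SimpleGraph.dist_comm
  have cc3 : G.dist b z = G.dist z b := SimpleGraph.dist_comm
  have ebw : G.dist b w = G.dist z b + 2 := by omega
  have hadjuz : G.Adj u z := by
    rw [← SimpleGraph.dist_eq_one_iff_adj]
    omega
  have hadjuw : G.Adj u w := by
    rw [← SimpleGraph.dist_eq_one_iff_adj]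
    exact hTe
  obtain ⟨y, hya, hy⟩ := nbhd_ivt hG hlc u b hadjuz hadjuw (G.dist b z + 1)
    (by omega) (by omega)
  have e1 : G.dist u y = 1 := SimpleGraph.dist_eq_one_iff_adj.mpr hya
  have hyz : y ≠ z := by rintro rfl; omega
  have hyu : y ≠ u := fun h => G.irrefl (h ▸ hya)
  have hyb : y ≠ b := by
    intro h
    rw [h, SimpleGraph.dist_self] at hy
    omega
  have t2 : G.dist z y ≤ G.dist z u + G.dist u y := hG.dist_triangle
  have hypos : 1 ≤ G.dist z y := hG.pos_dist_of_ne (Ne.symm hyz)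
  have hiff : y ∈ G.line z u ↔ y ∈ G.line z b := by rw [hlineb]
  rw [mem_line_iff, mem_line_iff] at hiff
  simp only [hyz, hyu, hyb, false_or] at hiff
  have cc4 : G.dist y u = G.dist u y := SimpleGraph.dist_comm
  have cc5 : G.dist y b = G.dist b y := SimpleGraph.dist_comm
  have cc6 : G.dist y z = G.dist z y := SimpleGraph.dist_comm
  have cc7 : G.dist b y = G.dist y b := SimpleGraph.dist_comm
  omega

lemma interval_comm {u v : V} :
    {c | G.dist u c + G.dist c v = G.dist u v} = {c | G.dist v c + G.dist c u = G.dist v u} := by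
  ext c
  simp only [Set.mem_setOf_eq]
  have c1 : G.dist u c = G.dist c u := SimpleGraph.dist_comm
  have c2 : G.dist v c = G.dist c v := SimpleGraph.dist_comm
  have c3 : G.dist u v = G.dist v u := SimpleGraph.dist_comm
  omega

end Main

theorem long_gen {V : Type*} [Fintype V] (G : SimpleGraph V)
    (hG : G.Connected) (hlc : G.LocallyConnected)
    {z a : V} (haz : a ≠ z) (hcard : 2 ≤ (G.lineClass z a).ncard)
    (hnotsub : ¬ G.lineClass z a ⊆ G.neighborSet z) :
    ∀ u ∈ G.lineClass z a, ∀ v ∈ G.lineClass z a, u ≠ v →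
      G.line u v = {w | G.dist u w + G.dist w v = G.dist u v} ∧
      z ∈ G.line u v ∧
      ∀ w : V, w ≠ z → G.line u v ≠ G.line z w := by
  intro u hu v hv huv
  obtain ⟨huz, hluA⟩ := hu
  obtain ⟨hvz, hlvA⟩ := hv
  have hline : G.line z u = G.line z v := hluA.trans hlvA.symm
  have hI := line_eq_interval hG hlc huz hvz huv hline
  have huvd : G.dist u v = G.dist u z + G.dist z v :=
    between_of_line_eq hG hlc huz hvz huv hline
  have hzmem : z ∈ G.line u v := by
    rw [hI, Set.mem_setOf_eq]
    exact huvd.symm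
  refine ⟨hI, hzmem, ?_⟩
  intro w hwz hcontra
  have hIw : G.line z w = {c | G.dist u c + G.dist c v = G.dist u v} :=
    hcontra.symm.trans hI
  obtain ⟨b, hbC, hbN⟩ := Set.not_subset.mp hnotsub
  obtain ⟨hbz, hlbA⟩ := hbC
  have hlzb : G.line z u = G.line z b := hluA.trans hlbA.symm
  have hPnot1 : G.dist z b ≠ 1 := by
    intro h
    exact hbN ((G.mem_neighborSet z b).mpr (SimpleGraph.dist_eq_one_iff_adj.mp h))
  have hPpos : 1 ≤ G.dist z b := hG.pos_dist_of_ne (Ne.symm hbz)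
  have hP : 2 ≤ G.dist z b := by omega
  have hK : 1 ≤ G.dist z u := hG.pos_dist_of_ne (Ne.symm huz)
  have hL : 1 ≤ G.dist z v := hG.pos_dist_of_ne (Ne.symm hvz)
  have hS : 1 ≤ G.dist z w := hG.pos_dist_of_ne (Ne.symm hwz)
  have hwI : G.dist u w + G.dist w v = G.dist u v := by
    have h := (right_mem_line : w ∈ G.line z w)
    rw [hIw, Set.mem_setOf_eq] at h
    exact h
  by_cases hwu : w = u
  · subst hwu
    exact not_line_self_interval hG hlc huz hvz huv hline hIw
  by_cases hwv : w = v
  · subst hwv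
    refine not_line_self_interval hG hlc hvz huz huv.symm hline.symm ?_
    rw [hIw]
    exact interval_comm
  have humem : u ∈ G.line z w := by
    rw [hIw, Set.mem_setOf_eq]
    have h1 : G.dist u u = 0 := SimpleGraph.dist_self
    omega
  have hvmem : v ∈ G.line z w := by
    rw [hIw, Set.mem_setOf_eq]
    have h1 : G.dist v v = 0 := SimpleGraph.dist_self
    omega
  rw [mem_line_iff] at humem hvmem
  have hwu' : u ≠ w := fun h => hwu h.symm
  have hwv' : v ≠ w := fun h => hwv h.symm
  simp only [huz, hvz, hwu', hwv', false_or] at humem hvmem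
  have hT : 1 ≤ G.dist u w := hG.pos_dist_of_ne hwu'
  have hT' : 1 ≤ G.dist w v := hG.pos_dist_of_ne hwv
  have cc1 : G.dist u z = G.dist z u := SimpleGraph.dist_comm
  have cc2 : G.dist v z = G.dist z v := SimpleGraph.dist_comm
  have cc3 : G.dist w u = G.dist u w := SimpleGraph.dist_comm
  have cc4 : G.dist w v = G.dist v w := SimpleGraph.dist_comm
  have cc0 : G.dist w z = G.dist z w := SimpleGraph.dist_comm
  rcases humem with h1 | h2 | h3
  · -- h1 : d z w = d z u + d u w : u between z and w
    rcases hvmem with g1 | g2 | g3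
    · -- antipodal case
      have hSd : G.dist z w = G.dist z u + G.dist z v := by omega
      have hTd : G.dist u w = G.dist z v := by omega
      have hT'd : G.dist v w = G.dist z u := by omega
      by_cases hL2 : 2 ≤ G.dist z v
      · exact not_antipodal_far hG hline huvd hSd hTd hT'd hK hL2
      by_cases hK2 : 2 ≤ G.dist z u
      · have cc5 : G.dist v u = G.dist u v := SimpleGraph.dist_comm
        refine not_antipodal_far (w := w) hG hline.symm (by omega) (by omega) (by omega)
          (by omega) hL hK2
      have hKe : G.dist z u = 1 := by omega
      have hub' : u ≠ b := by
        intro h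
        rw [← h] at hP
        omega
      have hub : G.dist u b = G.dist u z + G.dist z b :=
        between_of_line_eq hG hlc huz hbz hub' hlzb
      exact not_antipodal_one (w := w) (b := b) hG hlc hKe (by omega) (by omega) hlzb hP hub
    · exact not_between_v hG hlc huz hvz huv hwz hwv hline hIw (by omega)
    · omega
  · -- h2 : d z u = d z w + d w u : w strictly between z and u
    refine not_between_v hG hlc hvz huz huv.symm hwz hwu hline.symm ?_ (by omega)
    rw [hIw]
    exact interval_comm
  · -- h3 : d u w = d u z + d z w : z between u and w
    rcases hvmem with g1 | g2 | g3
    · omega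
    · exact not_between_v hG hlc huz hvz huv hwz hwv hline hIw (by omega)
    · omega
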